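/- Let p ≥ 2 be a natural number, let α > 0 and g ≥ 0 be real numbers, and let μ_2, …, μ_p be nonnegative real numbers. Suppose t ≥ 0 is a real number satisfying (α/(p+1)) · t^{p+1} ≤ g·t + Σ_{j=2}^{p} (μ_j / j!) · t^{j}. Then t ≤ 2 · max{ max_{1 ≤ k ≤ p−1} ((p+1) · μ_{p−k+1} / (α · (p−k+1)!))^{1/k}, ((p+1) · g / (2α))^{1/p} }. -/

import Mathlib

private lemma aux_rpow (x t : ℝ) (hx : 0 ≤ x) (k : ℕ) (hk : k ≠ 0)
    (h : 2 * x ^ ((1:ℝ)/(k:ℝ)) < t) : x < (t/2)^k := by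
  have h1 : x ^ ((1:ℝ)/(k:ℝ)) < t/2 := by linarith
  have h2 : (x ^ ((1:ℝ)/(k:ℝ)))^k < (t/2)^k :=
    pow_lt_pow_left₀ h1 (Real.rpow_nonneg hx _) hk
  rwa [← Real.rpow_natCast (x ^ ((1:ℝ)/(k:ℝ))) k, ← Real.rpow_mul hx,
    one_div, inv_mul_cancel₀ (Nat.cast_ne_zero.mpr hk), Real.rpow_one] at h2

private lemma geom_aux : ∀ p : ℕ, 2 ≤ p →
    ∑ j ∈ Finset.Icc 2 p, ((1:ℝ)/2)^(p - j + 1) = 1 - (1/2)^(p-1) := by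
  intro p
  induction p with
  | zero => omega
  | succ n ih =>
    intro hp
    rcases Nat.lt_or_ge n 2 with h | h
    · have hn : n = 1 := by omega
      subst hn
      norm_num
    · rw [Finset.sum_Icc_succ_top (by omega : 2 ≤ n+1)]
      have hcg : ∀ j ∈ Finset.Icc 2 n, ((1:ℝ)/2)^(n+1-j+1) = (1/2) * (1/2)^(n-j+1) := by
        intro j hj
        rw [Finset.mem_Icc] at hj
        rw [show n+1-j+1 = (n-j+1)+1 by omega, pow_succ]
        ring
      rw [Finset.sum_congr rfl hcg, ← Finset.mul_sum, ih h,
        show n + 1 - (n+1) + 1 = 1 by omega, show n + 1 - 1 = (n-1) + 1 by omega, pow_succ]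
      ring

private lemma pow_split (t : ℝ) (a b n : ℕ) (h : a + b = n) :
    (t/2)^a * t^b = t^n * (1/2)^a := by
  subst h; rw [div_pow, pow_add, one_div, inv_pow]; ring

/-- **Fujiwara-type root bound.** Let `p ≥ 2`, `α > 0`, `g ≥ 0`, and `μ_2,…,μ_p ≥ 0`.
If `t ≥ 0` satisfies `(α/(p+1)) t^{p+1} ≤ g·t + Σ_{j=2}^{p} (μ_j/j!) t^j`, then
`t ≤ 2 · max{ max_{1≤k≤p−1} ((p+1)μ_{p−k+1}/(α(p−k+1)!))^{1/k}, ((p+1)g/(2α))^{1/p} }`. -/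
theorem fujiwara_type_root_bound (p : ℕ) (hp : 2 ≤ p) (α g : ℝ) (hα : 0 < α)
    (hg : 0 ≤ g) (μ : ℕ → ℝ) (hμ : ∀ j, 2 ≤ j → j ≤ p → 0 ≤ μ j)
    (t : ℝ) (ht : 0 ≤ t)
    (hineq : α / ((p : ℝ) + 1) * t ^ (p + 1) ≤
      g * t + ∑ j ∈ Finset.Icc 2 p, μ j / (j.factorial : ℝ) * t ^ j) :
    t ≤ 2 * max
        ((Finset.Icc 1 (p - 1)).sup' (Finset.nonempty_Icc.mpr (by omega))
          (fun k => (((p : ℝ) + 1) * μ (p - k + 1) /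
              (α * ((p - k + 1).factorial : ℝ))) ^ ((1 : ℝ) / (k : ℝ))))
        ((((p : ℝ) + 1) * g / (2 * α)) ^ ((1 : ℝ) / (p : ℝ))) := by
  by_contra hcon
  push_neg at hcon
  set A := (Finset.Icc 1 (p - 1)).sup' (Finset.nonempty_Icc.mpr (by omega))
      (fun k => (((p : ℝ) + 1) * μ (p - k + 1) /
          (α * ((p - k + 1).factorial : ℝ))) ^ ((1 : ℝ) / (k : ℝ))) with hA
  set B := ((((p : ℝ) + 1) * g / (2 * α)) ^ ((1 : ℝ) / (p : ℝ))) with hB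
  have hp1 : (0:ℝ) < (p:ℝ) + 1 := by positivity
  have hB0 : (0:ℝ) ≤ B := Real.rpow_nonneg (by positivity) _
  have hM0 : (0:ℝ) ≤ max A B := le_trans hB0 (le_max_right _ _)
  have ht0 : 0 < t := by nlinarith [hcon]
  -- the gradient term
  have hg2 : 2 * B < t := by
    have := le_max_right A B
    nlinarith [this]
  have hgx : ((p:ℝ)+1)*g/(2*α) < (t/2)^p :=
    aux_rpow _ _ (by positivity) p (by omega) hg2
  have hgt : g * t < α/((p:ℝ)+1) * t^(p+1) * (1/2:ℝ)^(p-1) := by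
    have h1 : ((p:ℝ)+1)*g < (t/2)^p * (2*α) := (div_lt_iff₀ (by positivity)).mp hgx
    have h2 : ((p:ℝ)+1)*g*t < (t/2)^p * (2*α) * t :=
      mul_lt_mul_of_pos_right h1 ht0
    have hps : (t/2)^p * t = t^(p+1) * (1/2:ℝ)^p := by
      have := pow_split t p 1 (p+1) rfl
      rwa [pow_one] at this
    have hhalf : ((1:ℝ)/2)^p = (1/2)^(p-1) * (1/2) := by
      rw [← pow_succ]; congr 1; omega
    have key : (t/2)^p * (2*α) * t = α/((p:ℝ)+1) * t^(p+1) * (1/2:ℝ)^(p-1) * ((p:ℝ)+1) := by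
      calc (t/2)^p * (2*α) * t = ((t/2)^p * t) * (2*α) := by ring
        _ = t^(p+1) * (1/2:ℝ)^p * (2*α) := by rw [hps]
        _ = t^(p+1) * ((1/2:ℝ)^(p-1) * (1/2)) * (2*α) := by rw [hhalf]
        _ = α/((p:ℝ)+1) * t^(p+1) * (1/2:ℝ)^(p-1) * ((p:ℝ)+1) := by
            field_simp
    rw [key] at h2
    have := (mul_lt_mul_iff_left₀ hp1).mp (by linarith [h2] :
      g * t * ((p:ℝ)+1) < α/((p:ℝ)+1) * t^(p+1) * (1/2:ℝ)^(p-1) * ((p:ℝ)+1))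
    exact this
  -- termwise bound for the sum
  have hterm : ∀ j ∈ Finset.Icc 2 p,
      μ j / (j.factorial : ℝ) * t ^ j <
        α/((p:ℝ)+1) * t^(p+1) * (1/2:ℝ)^(p - j + 1) := by
    intro j hj
    rw [Finset.mem_Icc] at hj
    obtain ⟨hj2, hjp⟩ := hj
    set k := p - j + 1 with hk
    have hk1 : 1 ≤ k := by omega
    have hmem : k ∈ Finset.Icc 1 (p-1) := by
      rw [Finset.mem_Icc]; omega
    have hjk : p - k + 1 = j := by omega
    have hle : (((p : ℝ) + 1) * μ (p - k + 1) /
        (α * ((p - k + 1).factorial : ℝ))) ^ ((1 : ℝ) / (k : ℝ)) ≤ A :=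
      Finset.le_sup' (fun k : ℕ => (((p : ℝ) + 1) * μ (p - k + 1) /
          (α * ((p - k + 1).factorial : ℝ))) ^ ((1 : ℝ) / (k : ℝ))) hmem
    rw [hjk] at hle
    have hμj : 0 ≤ μ j := hμ j hj2 hjp
    have hfac : (0:ℝ) < (j.factorial : ℝ) := by
      exact_mod_cast j.factorial_pos
    have h2 : 2 * (((p:ℝ)+1) * μ j / (α * (j.factorial : ℝ))) ^ ((1:ℝ)/(k:ℝ)) < t := by
      have := le_max_left A B
      nlinarith [hle, this]
    have hx : ((p:ℝ)+1) * μ j / (α * (j.factorial : ℝ)) < (t/2)^k :=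
      aux_rpow _ _ (by positivity) k (by omega) h2
    have hc : (0:ℝ) < α/((p:ℝ)+1) * t^j := by positivity
    have h4 := mul_lt_mul_of_pos_right hx hc
    have lhs_eq : ((p:ℝ)+1) * μ j / (α * (j.factorial : ℝ)) * (α/((p:ℝ)+1) * t^j)
        = μ j / (j.factorial : ℝ) * t^j := by
      field_simp
    have rhs_eq : (t/2)^k * (α/((p:ℝ)+1) * t^j)
        = α/((p:ℝ)+1) * t^(p+1) * (1/2:ℝ)^k := by
      have hs := pow_split t k j (p+1) (by omega)
      calc (t/2)^k * (α/((p:ℝ)+1) * t^j) = ((t/2)^k * t^j) * (α/((p:ℝ)+1)) := by ring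
        _ = (t^(p+1) * (1/2:ℝ)^k) * (α/((p:ℝ)+1)) := by rw [hs]
        _ = α/((p:ℝ)+1) * t^(p+1) * (1/2:ℝ)^k := by ring
    rw [lhs_eq, rhs_eq] at h4
    exact h4
  have hne : (Finset.Icc 2 p).Nonempty := Finset.nonempty_Icc.mpr hp
  have hsum : ∑ j ∈ Finset.Icc 2 p, μ j / (j.factorial : ℝ) * t ^ j <
      ∑ j ∈ Finset.Icc 2 p, α/((p:ℝ)+1) * t^(p+1) * (1/2:ℝ)^(p - j + 1) :=
    Finset.sum_lt_sum_of_nonempty hne hterm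
  have hsum2 : ∑ j ∈ Finset.Icc 2 p, α/((p:ℝ)+1) * t^(p+1) * (1/2:ℝ)^(p - j + 1)
      = α/((p:ℝ)+1) * t^(p+1) * (1 - (1/2:ℝ)^(p-1)) := by
    rw [← Finset.mul_sum, geom_aux p hp]
  rw [hsum2] at hsum
  nlinarith [hineq, hgt, hsum]
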